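/- arXiv:1905.03635 — 4 statements merged into one kernel-verified Lean document; each statement's English description precedes it below -/
import Mathlib

section
/- The componentwise (Schur) product of two generalized Reed-Solomon codes with the same support satisfies GRS_r(x,y) ⋆ GRS_t(x,z) = GRS_{r+t-1}(x, y⋆z), where y⋆z is the componentwise product, provided r + t - 1 ≤ n. -/
open Polynomial

def GRS {F : Type*} [Field F] {n : ℕ} (k : ℕ) (x y : Fin n → F) : Set (Fin n → F) :=
  {v | ∃ f : F[X], f.degree < k ∧ ∀ i, v i = y i * f.eval (x i)}

/-- The set of componentwise (Schur) products of elements of `A` and `B`. -/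
def starSet {F : Type*} [Field F] {n : ℕ} (A B : Set (Fin n → F)) : Set (Fin n → F) :=
  {w | ∃ a ∈ A, ∃ b ∈ B, w = a * b}

noncomputable def grsMap {F : Type*} [Field F] {n : ℕ} (x y : Fin n → F) :
    F[X] →ₗ[F] (Fin n → F) where
  toFun f := fun i => y i * f.eval (x i)
  map_add' f g := by funext i; simp [mul_add]
  map_smul' c f := by funext i; simp [smul_eq_mul]; ring

lemma grs_eq {F : Type*} [Field F] {n : ℕ} (k : ℕ) (x y : Fin n → F) :
    GRS k x y = ↑((Polynomial.degreeLT F k).map (grsMap x y)) := by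
  ext v
  simp only [GRS, Set.mem_setOf_eq, SetLike.mem_coe, Submodule.mem_map, mem_degreeLT,
    grsMap, LinearMap.coe_mk, AddHom.coe_mk, funext_iff]
  exact ⟨fun ⟨f, h1, h2⟩ => ⟨f, h1, fun i => (h2 i).symm⟩,
    fun ⟨f, h1, h2⟩ => ⟨f, h1, fun i => (h2 i).symm⟩⟩

/-- The star product (span of componentwise products) of two GRS codes with the same
support is the GRS code `GRS_{r+t-1}(x, y ⋆ z)`. -/
theorem grs_star_product {F : Type*} [Field F] {n : ℕ} (r t : ℕ)
    (hr : 1 ≤ r) (ht : 1 ≤ t) (hn : r + t - 1 ≤ n)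
    (x y z : Fin n → F) (hx : Function.Injective x)
    (hy : ∀ i, y i ≠ 0) (hz : ∀ i, z i ≠ 0) :
    (Submodule.span F (starSet (GRS r x y) (GRS t x z)) : Set (Fin n → F))
      = GRS (r + t - 1) x (y * z) := by
  apply Set.Subset.antisymm
  · -- span ⊆ GRS
    rw [grs_eq (r + t - 1) x (y * z)]
    refine fun v hv => Submodule.span_le.mpr ?_ hv
    rintro w ⟨a, ⟨f, hf, ha⟩, b, ⟨g, hg, hb⟩, rfl⟩
    refine ⟨f * g, mem_degreeLT.mpr ?_, ?_⟩
    · by_cases hf0 : f = 0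
      · simpa [hf0] using lt_of_lt_of_le (WithBot.bot_lt_coe 1) (by exact_mod_cast by omega)
      by_cases hg0 : g = 0
      · simpa [hg0] using lt_of_lt_of_le (WithBot.bot_lt_coe 1) (by exact_mod_cast by omega)
      rw [← natDegree_lt_iff_degree_lt (mul_ne_zero hf0 hg0), natDegree_mul hf0 hg0]
      have h1 : f.natDegree < r := (natDegree_lt_iff_degree_lt hf0).mpr hf
      have h2 : g.natDegree < t := (natDegree_lt_iff_degree_lt hg0).mpr hg
      omega
    · funext i
      simp only [grsMap, LinearMap.coe_mk, AddHom.coe_mk, eval_mul, Pi.mul_apply, ha i, hb i]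
      ring
  · -- GRS ⊆ span
    rintro v ⟨h, hdeg, hv⟩
    have hnd : h.natDegree < r + t - 1 := by
      by_cases h0 : h = 0
      · simp [h0]; omega
      · exact (natDegree_lt_iff_degree_lt h0).mpr hdeg
    have hveq : v = ∑ a ∈ Finset.range (h.natDegree + 1),
        h.coeff a • (fun i => y i * z i * x i ^ a) := by
      funext i
      rw [hv i, eval_eq_sum_range]
      simp only [Finset.sum_apply, Pi.smul_apply, smul_eq_mul, Pi.mul_apply, Finset.mul_sum]
      exact Finset.sum_congr rfl fun a _ => by ring
    rw [hveq]
    refine Submodule.sum_mem _ fun a ha => Submodule.smul_mem _ _ (Submodule.subset_span ?_)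
    have haa : a < r + t - 1 := by
      have := Finset.mem_range.mp ha; omega
    refine ⟨fun i => y i * x i ^ (min a (r - 1)), ⟨X ^ (min a (r - 1)), ?_, fun i => by simp⟩,
      fun i => z i * x i ^ (a - min a (r - 1)), ⟨X ^ (a - min a (r - 1)), ?_, fun i => by simp⟩, ?_⟩
    · rw [degree_X_pow]
      exact_mod_cast (by omega : min a (r - 1) < r)
    · rw [degree_X_pow]
      exact_mod_cast (by omega : a - min a (r - 1) < t)
    · funext i
      simp only [Pi.mul_apply]
      have hp : x i ^ (min a (r - 1)) * x i ^ (a - min a (r - 1)) = x i ^ a := by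
        rw [← pow_add]; congr 1; omega
      rw [← hp]; ring
end

section
/- The dual of a generalized Reed-Solomon code is a generalized Reed-Solomon code: GRS_t(x,y)^⊥ = GRS_{n-t}(x, y^⊥), where (y^⊥_j)^{-1} = y_j · ∏_{ℓ≠j} (x_ℓ - x_j). -/
open Polynomial

section Aux
open Finset
variable {F : Type*} [Field F]

lemma coeff_basis' {n : ℕ} (x : Fin n → F) (i : Fin n) :
    (Lagrange.basis Finset.univ x i).coeff (n - 1) =
      ∏ j ∈ Finset.univ.erase i, (x i - x j)⁻¹ := by
  unfold Lagrange.basis Lagrange.basisDivisor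
  rw [Finset.prod_mul_distrib, ← map_prod (C : F →+* F[X])]
  have hmonic : ∀ j ∈ Finset.univ.erase i, (X - C (x j)).Monic :=
    fun j _ => monic_X_sub_C (x j)
  have hm := monic_prod_of_monic _ _ hmonic
  have hdeg : (∏ j ∈ Finset.univ.erase i, (X - C (x j))).natDegree = n - 1 := by
    rw [natDegree_prod_of_monic _ _ hmonic]
    simp [Finset.card_erase_of_mem]
  rw [coeff_C_mul, ← hdeg, Polynomial.Monic.coeff_natDegree hm, mul_one]

lemma coeff_interpolate' {n : ℕ} (x : Fin n → F) (r : Fin n → F) :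
    (Lagrange.interpolate Finset.univ x r).coeff (n - 1) =
      ∑ i, r i * ∏ j ∈ Finset.univ.erase i, (x i - x j)⁻¹ := by
  rw [Lagrange.interpolate_apply, finset_sum_coeff]
  refine Finset.sum_congr rfl fun i _ => ?_
  rw [coeff_C_mul, coeff_basis' x i]

lemma key_sum {n : ℕ} (x : Fin n → F) (hx : Function.Injective x) (h : F[X])
    (hdeg : h.degree < (n : ℕ)) :
    ∑ i, h.eval (x i) * ∏ j ∈ Finset.univ.erase i, (x i - x j)⁻¹ = h.coeff (n - 1) := by
  have hcard : #(Finset.univ : Finset (Fin n)) = n := by simp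
  have := Lagrange.eq_interpolate (s := Finset.univ) (v := x) (f := h)
    (Function.Injective.injOn hx) (by rw [hcard]; exact hdeg)
  conv_rhs => rw [this]
  rw [coeff_interpolate']

end Aux

def dualCode {F : Type*} [Field F] {n : ℕ} (C : Set (Fin n → F)) : Set (Fin n → F) :=
  {z | ∀ c ∈ C, ∑ i, c i * z i = 0}

/-- The dual of a GRS code is a GRS code: `GRS_t(x,y)^⊥ = GRS_{n-t}(x,y^⊥)`, where
`(y^⊥_j)⁻¹ = y_j ∏_{ℓ≠j} (x_ℓ - x_j)`. -/
theorem grs_dual {F : Type*} [Field F] {n t : ℕ} (ht : t ≤ n)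
    (x y y' : Fin n → F) (hx : Function.Injective x) (hy : ∀ i, y i ≠ 0)
    (hy' : ∀ j, (y' j)⁻¹ = y j * ∏ ℓ ∈ Finset.univ.erase j, (x ℓ - x j)) :
    dualCode (GRS t x y) = GRS (n - t) x y' := by
  set P : Fin n → F := fun i => ∏ ℓ ∈ Finset.univ.erase i, (x ℓ - x i) with hP
  set Q : Fin n → F := fun i => ∏ ℓ ∈ Finset.univ.erase i, (x i - x ℓ) with hQ
  have hQ0 : ∀ i, Q i ≠ 0 := by
    intro i
    rw [hQ]
    refine Finset.prod_ne_zero_iff.mpr fun ℓ hℓ => sub_ne_zero_of_ne fun h => ?_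
    exact (Finset.mem_erase.mp hℓ).1 (hx h.symm)
  have hPQ : ∀ i, P i = (-1 : F) ^ (n - 1) * Q i := by
    intro i
    calc P i = ∏ ℓ ∈ Finset.univ.erase i, (-1) * (x i - x ℓ) :=
          Finset.prod_congr rfl (fun ℓ _ => by ring)
      _ = (∏ _ℓ ∈ Finset.univ.erase i, (-1 : F)) * Q i := Finset.prod_mul_distrib
      _ = (-1) ^ (n - 1) * Q i := by
          rw [Finset.prod_const, Finset.card_erase_of_mem (Finset.mem_univ i),
            Finset.card_univ, Fintype.card_fin]
  have hP0 : ∀ i, P i ≠ 0 := fun i => by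
    rw [hPQ i]; exact mul_ne_zero (by simp) (hQ0 i)
  have hy'val : ∀ i, y' i = (y i * P i)⁻¹ := fun i => by rw [← hy' i, inv_inv]
  have hy'0 : ∀ i, y' i ≠ 0 := fun i => by
    rw [hy'val i]
    exact inv_ne_zero (mul_ne_zero (hy i) (hP0 i))
  have hQinv : ∀ i, (Q i)⁻¹ = ∏ j ∈ Finset.univ.erase i, (x i - x j)⁻¹ := fun i =>
    (Finset.prod_inv_distrib _).symm
  ext z
  constructor
  · -- dual ⊆ GRS (n-t)
    intro hz
    set vals : Fin n → F := fun i => z i * (y i * P i) with hvals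
    set f : F[X] := Lagrange.interpolate Finset.univ x vals with hf
    have heval : ∀ i, f.eval (x i) = vals i := fun i =>
      Lagrange.eval_interpolate_at_node vals (Function.Injective.injOn hx) (Finset.mem_univ i)
    have hzf : ∀ i, z i = y' i * f.eval (x i) := by
      intro i
      rw [heval i, hvals]
      simp only
      rw [← hy' i]
      field_simp [hy'0 i]
    have main : ∀ k, k ≤ t → f.degree < ((n - k : ℕ) : WithBot ℕ) := by
      intro k
      induction k with
      | zero =>
        intro _
        have := Lagrange.degree_interpolate_lt vals
          (Function.Injective.injOn hx (s := (Finset.univ : Finset (Fin n))))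
        simp only [Finset.card_univ, Fintype.card_fin, Nat.sub_zero] at this ⊢; exact this
      | succ k ih =>
        intro hk1
        have ihd := ih (Nat.le_of_succ_le hk1)
        rw [Polynomial.degree_lt_iff_coeff_zero]
        intro m hm
        rcases eq_or_ne f 0 with hf0 | hf0
        · simp [hf0]
        have hm' : ((n - k : ℕ) : WithBot ℕ) ≤ m ∨ m = n - 1 - k := by
          rcases le_or_gt (n - k) m with h | h
          · exact Or.inl (by exact_mod_cast Nat.cast_le.mpr h)
          · right; omega
        rcases hm' with h | h
        · exact Polynomial.coeff_eq_zero_of_degree_lt (lt_of_lt_of_le ihd h)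
        · subst h
          -- show coeff f (n-1-k) = 0 via f * X^k
          have hnd : f.natDegree < n - k := by
            rw [Polynomial.natDegree_lt_iff_degree_lt hf0]; exact ihd
          have hmul0 : f * X ^ k ≠ 0 := mul_ne_zero hf0 (pow_ne_zero _ Polynomial.X_ne_zero)
          have hdmul : (f * X ^ k).degree < ((n : ℕ) : WithBot ℕ) := by
            refine (Polynomial.natDegree_lt_iff_degree_lt hmul0).mp ?_
            rw [Polynomial.natDegree_mul hf0 (pow_ne_zero _ Polynomial.X_ne_zero),
              Polynomial.natDegree_X_pow]
            omega
          have hdual : ∑ i, (y i * x i ^ k) * z i = 0 := by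
            have := hz (fun i => y i * (X ^ k : F[X]).eval (x i))
              ⟨X ^ k, by
                rw [Polynomial.degree_X_pow]
                exact_mod_cast Nat.cast_lt.mpr hk1, fun i => rfl⟩
            simpa using this
          have hsum := key_sum x hx (f * X ^ k) hdmul
          have hterm : ∀ i, (f * X ^ k).eval (x i) * ∏ j ∈ Finset.univ.erase i, (x i - x j)⁻¹
              = (-1 : F) ^ (n - 1) * ((y i * x i ^ k) * z i) := by
            intro i
            rw [eval_mul, eval_pow, eval_X, heval i, ← hQinv i, hvals]
            simp only
            rw [hPQ i]
            field_simp [hQ0 i]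
          have hcoeff : (f * X ^ k).coeff (n - 1) = 0 := by
            rw [← hsum]
            calc ∑ i, (f * X ^ k).eval (x i) * ∏ j ∈ Finset.univ.erase i, (x i - x j)⁻¹
                = ∑ i, (-1 : F) ^ (n - 1) * ((y i * x i ^ k) * z i) :=
                  Finset.sum_congr rfl fun i _ => hterm i
              _ = (-1 : F) ^ (n - 1) * ∑ i, (y i * x i ^ k) * z i := by
                  rw [Finset.mul_sum]
              _ = 0 := by rw [hdual, mul_zero]
          have : f.coeff (n - 1 - k) = 0 := by
            rw [← hcoeff, Polynomial.coeff_mul_X_pow']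
            have hkn : k ≤ n - 1 := by omega
            simp [hkn]
          exact this
    exact ⟨f, main t le_rfl, hzf⟩
  · -- GRS (n-t) ⊆ dual
    rintro ⟨g, hg, hzg⟩ c ⟨f, hf, hcf⟩
    rcases eq_or_ne f 0 with hf0 | hf0
    · simp [hcf, hf0]
    rcases eq_or_ne g 0 with hg0 | hg0
    · simp [hzg, hg0]
    have hyy' : ∀ i, y i * y' i = (-1 : F) ^ (n - 1) * (Q i)⁻¹ := by
      intro i
      rw [hy'val i, hPQ i]
      have h1 : ((-1 : F) ^ (n - 1)) * ((-1 : F) ^ (n - 1)) = 1 := by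
        rw [← pow_add, ← two_mul, pow_mul]; norm_num
      field_simp [hQ0 i, hy i]
      linear_combination (-1 : F) * h1
    have hndf : f.natDegree < t := (Polynomial.natDegree_lt_iff_degree_lt hf0).mpr hf
    have hndg : g.natDegree < n - t := (Polynomial.natDegree_lt_iff_degree_lt hg0).mpr hg
    have hmul0 : f * g ≠ 0 := mul_ne_zero hf0 hg0
    have hndm : (f * g).natDegree = f.natDegree + g.natDegree :=
      Polynomial.natDegree_mul hf0 hg0
    have hdm : (f * g).degree < (n : ℕ) := by
      refine (Polynomial.natDegree_lt_iff_degree_lt hmul0).mp ?_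
      rw [hndm]; omega
    have hcz : (f * g).coeff (n - 1) = 0 :=
      Polynomial.coeff_eq_zero_of_natDegree_lt (by rw [hndm]; omega)
    have hsum := key_sum x hx (f * g) hdm
    calc ∑ i, c i * z i
        = ∑ i, (-1 : F) ^ (n - 1) *
            ((f * g).eval (x i) * ∏ j ∈ Finset.univ.erase i, (x i - x j)⁻¹) := by
          refine Finset.sum_congr rfl fun i _ => ?_
          rw [hcf i, hzg i, eval_mul, ← hQinv i]
          rw [show y i * f.eval (x i) * (y' i * g.eval (x i))
              = (y i * y' i) * (f.eval (x i) * g.eval (x i)) by ring, hyy' i]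
          ring
      _ = (-1 : F) ^ (n - 1) * ∑ i, (f * g).eval (x i) *
            ∏ j ∈ Finset.univ.erase i, (x i - x j)⁻¹ := by rw [Finset.mul_sum]
      _ = 0 := by rw [hsum, hcz, mul_zero]
end

section
/- For alternant codes over K ⊂ F with the same support x and multiplier y: A_{r+t-1}(x,y) ⋆ (RS_t(x) ∩ K^n) ⊆ A_r(x,y), for any integers r ≥ 1 and t ≥ 1. -/
open Polynomial

/-- The alternant code `A_t(x,y)` over `K`. -/
def alternantSet (K : Type*) {F : Type*} [Field K] [Field F] [Algebra K F] {n : ℕ}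
    (t : ℕ) (x y : Fin n → F) : Set (Fin n → F) :=
  {v | (∀ c ∈ GRS t x y, ∑ i, c i * v i = 0) ∧ ∀ i, v i ∈ Set.range (algebraMap K F)}

/-- The Reed-Solomon code `RS_t(x)` restricted to vectors with entries in `K`. -/
def rsSubfield (K : Type*) {F : Type*} [Field K] [Field F] [Algebra K F] {n : ℕ}
    (t : ℕ) (x : Fin n → F) : Set (Fin n → F) :=
  {v | v ∈ GRS t x (fun _ => 1) ∧ ∀ i, v i ∈ Set.range (algebraMap K F)}

def alternantSubmodule (K : Type*) {F : Type*} [Field K] [Field F] [Algebra K F] {n : ℕ}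
    (t : ℕ) (x y : Fin n → F) : Submodule K (Fin n → F) where
  carrier := alternantSet K t x y
  add_mem' := by
    rintro a b ⟨ha1, ha2⟩ ⟨hb1, hb2⟩
    refine ⟨fun c hc => ?_, fun i => ?_⟩
    · simp only [Pi.add_apply, mul_add, Finset.sum_add_distrib, ha1 c hc, hb1 c hc, add_zero]
    · obtain ⟨u, hu⟩ := ha2 i; obtain ⟨v, hv⟩ := hb2 i
      exact ⟨u + v, by simp [hu, hv]⟩
  zero_mem' := ⟨fun c hc => by simp, fun i => ⟨0, by simp⟩⟩
  smul_mem' := by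
    rintro k v ⟨h1, h2⟩
    refine ⟨fun c hc => ?_, fun i => ?_⟩
    · have : ∑ i, c i * (k • v) i = algebraMap K F k * ∑ i, c i * v i := by
        rw [Finset.mul_sum]
        refine Finset.sum_congr rfl fun i _ => ?_
        simp only [Pi.smul_apply, Algebra.smul_def]; ring
      rw [this, h1 c hc, mul_zero]
    · obtain ⟨u, hu⟩ := h2 i
      exact ⟨k * u, by simp [map_mul, hu, Algebra.smul_def]⟩

/-- `A_{r+t-1}(x,y) ⋆ (RS_t(x) ∩ Kⁿ) ⊆ A_r(x,y)`, the star product taken as a span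
over `K`. -/
theorem alternant_star_rs_subset (K F : Type*) [Field K] [Field F] [Algebra K F]
    {n : ℕ} (r t : ℕ) (hr : 1 ≤ r) (ht : 1 ≤ t)
    (x y : Fin n → F) (hx : Function.Injective x) (hy : ∀ i, y i ≠ 0) :
    (Submodule.span K (starSet (alternantSet K (r + t - 1) x y) (rsSubfield K t x)) :
        Set (Fin n → F))
      ⊆ alternantSet K r x y := by
  have hsub : starSet (alternantSet K (r + t - 1) x y) (rsSubfield K t x)
      ⊆ (alternantSubmodule K r x y : Set (Fin n → F)) := by
    rintro w ⟨a, ⟨ha1, ha2⟩, b, ⟨⟨g, hg, hgb⟩, hb2⟩, rfl⟩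
    refine ⟨fun c hc => ?_, fun i => ?_⟩
    · obtain ⟨f, hf, hcf⟩ := hc
      have hmem : (fun i => c i * b i) ∈ GRS (r + t - 1) x y := by
        refine ⟨f * g, ?_, fun i => by simp only [hcf i, hgb i, eval_mul]; ring⟩
        rcases eq_or_ne (f * g) 0 with h0 | h0
        · rw [h0, degree_zero]
          exact WithBot.bot_lt_coe _
        · have hf0 : f ≠ 0 := fun h => h0 (by simp [h])
          have hg0 : g ≠ 0 := fun h => h0 (by simp [h])
          rw [← natDegree_lt_iff_degree_lt h0, natDegree_mul hf0 hg0]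
          have h1 : f.natDegree < r := (natDegree_lt_iff_degree_lt hf0).mpr hf
          have h2 : g.natDegree < t := (natDegree_lt_iff_degree_lt hg0).mpr hg
          omega
      have := ha1 _ hmem
      calc ∑ i, c i * (a * b) i = ∑ i, (c i * b i) * a i := by
            refine Finset.sum_congr rfl fun i _ => ?_
            simp only [Pi.mul_apply]; ring
        _ = 0 := this
    · obtain ⟨u, hu⟩ := ha2 i; obtain ⟨v, hv⟩ := hb2 i
      exact ⟨u * v, by simp [map_mul, hu, hv]⟩
  exact fun w hw => Submodule.span_le.mpr hsub hw
end

section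
/- Inclusion of products into duals-intersected-with-subfield: (GRS_{n-r}(x,y') ∩ K^n) ⋆ (GRS_t(x,1) ∩ K^n) ⊆ GRS_{n-r+t-1}(x,y') ∩ K^n, where the star product is taken as a span over K. -/
open Polynomial

/-- The vectors of a code `C ⊆ Fⁿ` whose entries lie in (the image of) `K`. -/
def subfieldCode (K : Type*) {F : Type*} [Field K] [Field F] [Algebra K F] {n : ℕ}
    (C : Set (Fin n → F)) : Set (Fin n → F) :=
  {v | v ∈ C ∧ ∀ i, v i ∈ Set.range (algebraMap K F)}

lemma deg_mul_lt {F : Type*} [Field F] {f g : F[X]} {a b : ℕ}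
    (hf : f.degree < a) (hg : g.degree < b) :
    (f * g).degree < (a + b - 1 : ℕ) := by
  rcases eq_or_ne f 0 with rfl | hf0
  · rw [zero_mul, degree_zero]
    exact_mod_cast WithBot.bot_lt_coe (a + b - 1)
  rcases eq_or_ne g 0 with rfl | hg0
  · rw [mul_zero, degree_zero]
    exact_mod_cast WithBot.bot_lt_coe (a + b - 1)
  rw [degree_mul, degree_eq_natDegree hf0, degree_eq_natDegree hg0] at *
  have h1 : f.natDegree < a := by exact_mod_cast hf
  have h2 : g.natDegree < b := by exact_mod_cast hg
  have : f.natDegree + g.natDegree < a + b - 1 := by omega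
  exact_mod_cast this

def grsSubK (K : Type*) {F : Type*} [Field K] [Field F] [Algebra K F] {n : ℕ}
    (k : ℕ) (x y : Fin n → F) : Submodule K (Fin n → F) where
  carrier := subfieldCode K (GRS k x y)
  zero_mem' := by
    refine ⟨⟨0, by rw [degree_zero]; exact_mod_cast WithBot.bot_lt_coe k, fun i => by simp⟩,
      fun i => ⟨0, by simp⟩⟩
  add_mem' := by
    rintro a b ⟨⟨f, hf, hfa⟩, ha2⟩ ⟨⟨g, hg, hgb⟩, hb2⟩
    refine ⟨⟨f + g, lt_of_le_of_lt (degree_add_le f g) (max_lt hf hg), fun i => ?_⟩, fun i => ?_⟩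
    · simp [hfa i, hgb i, mul_add]
    · obtain ⟨c1, h1⟩ := ha2 i
      obtain ⟨c2, h2⟩ := hb2 i
      exact ⟨c1 + c2, by simp [h1, h2]⟩
  smul_mem' := by
    rintro c v ⟨⟨f, hf, hv⟩, hv2⟩
    refine ⟨⟨C (algebraMap K F c) * f, lt_of_le_of_lt ((degree_mul_le _ _).trans (by simpa using add_le_add_left (degree_C_le (a := algebraMap K F c)) f.degree)) hf, fun i => ?_⟩,
      fun i => ?_⟩
    · simp [hv i, Algebra.smul_def]
      ring
    · obtain ⟨c1, h1⟩ := hv2 i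
      exact ⟨c * c1, by simp [h1, Algebra.smul_def]⟩

/-- `(GRS_{n-r}(x,y') ∩ Kⁿ) ⋆ (GRS_t(x,1) ∩ Kⁿ) ⊆ GRS_{n-r+t-1}(x,y') ∩ Kⁿ`, the star
product being the span over `K`. -/
theorem grs_subfield_star_subset (K F : Type*) [Field K] [Field F] [Algebra K F]
    {n : ℕ} (r t : ℕ) (hr : 1 ≤ r) (ht : 1 ≤ t) (hrn : r ≤ n)
    (hn : n - r + t - 1 ≤ n)
    (x y' : Fin n → F) (hx : Function.Injective x) (hy' : ∀ i, y' i ≠ 0) :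
    (Submodule.span K (starSet (subfieldCode K (GRS (n - r) x y'))
        (subfieldCode K (GRS t x (fun _ => 1)))) : Set (Fin n → F))
      ⊆ subfieldCode K (GRS (n - r + t - 1) x y') := by
  have hstar : starSet (subfieldCode K (GRS (n - r) x y'))
      (subfieldCode K (GRS t x (fun _ => 1))) ⊆ (grsSubK K (n - r + t - 1) x y' : Set _) := by
    rintro w ⟨a, ⟨⟨f, hf, hfa⟩, ha2⟩, b, ⟨⟨g, hg, hgb⟩, hb2⟩, rfl⟩
    refine ⟨⟨f * g, deg_mul_lt hf hg, fun i => ?_⟩, fun i => ?_⟩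
    · simp [hfa i, hgb i]
      ring
    · obtain ⟨c1, h1⟩ := ha2 i
      obtain ⟨c2, h2⟩ := hb2 i
      exact ⟨c1 * c2, by simp [h1, h2]⟩
  exact Submodule.span_le.mpr hstar
end
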